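/- For n ≥ 6 and r > 0, the weight of the 1-isolated cut minus the weight of the 2-isolated cut equals r^{N-1} - (r^{N-n} + r^{N-n-1} + ... + r^{N-2n+3}), where N = n(n-1)/2. That is, P^{n,1}(r) = r^{N-1} - Σ_{i=0}^{n-3} r^{N-n-i}. -/

import Mathlib

open Finset

/-- Lexicographic index of edge (i,j), i<j, in K_n (1-based). -/
def idx (n i j : ℕ) : ℕ := (i - 1) * n - i * (i - 1) / 2 + (j - i)

/-- Geometric-weight cut value: sum over edges (i,j), 1 ≤ i < j ≤ n, crossing S,
of r^(N - idx(i,j)) where N = C(n,2). -/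
noncomputable def cutW (n : ℕ) (S : Finset ℕ) (r : ℝ) : ℝ :=
  ∑ i ∈ Finset.Icc 1 n, ∑ j ∈ Finset.Icc (i + 1) n,
    if (i ∈ S) ↔ (j ∈ S) then 0 else r ^ (n * (n - 1) / 2 - idx n i j)

/-- P^{n,k}(r) = W^n(C_k;r) - W^n(C_{k+1};r), where C_k = {1,...,k}. -/
noncomputable def P (n k : ℕ) (r : ℝ) : ℝ :=
  cutW n (Finset.Icc 1 k) r - cutW n (Finset.Icc 1 (k + 1)) r

/-- For n ≥ 6 and r > 0, P^{n,1}(r) = r^{N-1} - Σ_{i=0}^{n-3} r^{N-n-i}, N = C(n,2). -/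
theorem stmt_1 (n : ℕ) (hn : 6 ≤ n) (r : ℝ) (hr : 0 < r) :
    P n 1 r
      = r ^ (n * (n - 1) / 2 - 1)
        - ∑ i ∈ Finset.range (n - 2), r ^ (n * (n - 1) / 2 - n - i) := by
  have hsplit : Finset.Icc 2 n = insert 2 (Finset.Icc 3 n) := by
    ext x; simp [Finset.mem_Icc, Finset.mem_insert]; omega
  have h2notin : (2 : ℕ) ∉ Finset.Icc 3 n := by simp
  have h1 : cutW n (Finset.Icc 1 1) r
      = r ^ (n * (n - 1) / 2 - idx n 1 2)
        + ∑ j ∈ Finset.Icc 3 n, r ^ (n * (n - 1) / 2 - idx n 1 j) := by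
    unfold cutW
    rw [Finset.sum_eq_single 1]
    · have : (1:ℕ) + 1 = 2 := rfl
      rw [this, hsplit, Finset.sum_insert h2notin,
        if_neg (by simp [Finset.mem_Icc])]
      congr 1
      apply Finset.sum_congr rfl
      intro j hj
      simp only [Finset.mem_Icc] at hj
      rw [if_neg]; simp [Finset.mem_Icc]; omega
    · intro i hi hne
      apply Finset.sum_eq_zero
      intro j hj
      simp only [Finset.mem_Icc] at hi hj
      rw [if_pos]; simp [Finset.mem_Icc]; omega
    · intro h; simp [Finset.mem_Icc] at h; omega
  have h2 : cutW n (Finset.Icc 1 2) r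
      = (∑ j ∈ Finset.Icc 3 n, r ^ (n * (n - 1) / 2 - idx n 1 j))
        + ∑ j ∈ Finset.Icc 3 n, r ^ (n * (n - 1) / 2 - idx n 2 j) := by
    unfold cutW
    have hIcc : Finset.Icc 1 n = Finset.Ioc 0 n := by
      ext x; simp [Finset.mem_Icc, Finset.mem_Ioc]; omega
    rw [hIcc, ← Finset.sum_Ioc_consecutive _ (by omega : (0:ℕ) ≤ 2) (by omega : (2:ℕ) ≤ n)]
    have hIoc02 : Finset.Ioc 0 2 = ({1, 2} : Finset ℕ) := by decide
    have hrest : ∑ i ∈ Finset.Ioc 2 n, ∑ j ∈ Finset.Icc (i + 1) n,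
        (if (i ∈ Finset.Icc 1 2) ↔ (j ∈ Finset.Icc 1 2) then 0
         else r ^ (n * (n - 1) / 2 - idx n i j)) = 0 := by
      apply Finset.sum_eq_zero
      intro i hi
      apply Finset.sum_eq_zero
      intro j hj
      simp only [Finset.mem_Ioc] at hi
      simp only [Finset.mem_Icc] at hj
      rw [if_pos]; simp [Finset.mem_Icc]; omega
    rw [hrest, add_zero, hIoc02]
    rw [Finset.sum_insert (by decide), Finset.sum_singleton]
    congr 1
    · -- i = 1 term
      have : (1:ℕ) + 1 = 2 := rfl
      rw [this, hsplit, Finset.sum_insert h2notin]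
      have h20 : (if (1 ∈ Finset.Icc 1 2) ↔ ((2:ℕ) ∈ Finset.Icc 1 2) then (0:ℝ)
          else r ^ (n * (n - 1) / 2 - idx n 1 2)) = 0 := by
        rw [if_pos]; simp [Finset.mem_Icc]
      rw [h20, zero_add]
      apply Finset.sum_congr rfl
      intro j hj
      simp only [Finset.mem_Icc] at hj
      rw [if_neg]; simp [Finset.mem_Icc]; omega
    · -- i = 2 term
      have : (2:ℕ) + 1 = 3 := rfl
      rw [this]
      apply Finset.sum_congr rfl
      intro j hj
      simp only [Finset.mem_Icc] at hj
      rw [if_neg]; simp [Finset.mem_Icc]; omega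
  unfold P
  rw [h1, h2]
  have hidx12 : idx n 1 2 = 1 := by unfold idx; simp
  have hsum : ∑ j ∈ Finset.Icc 3 n, r ^ (n * (n - 1) / 2 - idx n 2 j)
      = ∑ i ∈ Finset.range (n - 2), r ^ (n * (n - 1) / 2 - n - i) := by
    have hIco : Finset.Icc 3 n = Finset.Ico 3 (n + 1) := by
      ext x; simp [Finset.mem_Icc, Finset.mem_Ico]
    rw [hIco, Finset.sum_Ico_eq_sum_range]
    have hcard : n + 1 - 3 = n - 2 := by omega
    rw [hcard]
    apply Finset.sum_congr rfl
    intro i hi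
    simp only [Finset.mem_range] at hi
    congr 1
    unfold idx
    have : (2 - 1) * n - 2 * (2 - 1) / 2 + (3 + i - 2) = n + i := by omega
    rw [this]
    omega
  rw [hidx12, hsum]
  ring
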